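/- For positive integers m, n, the identity ∑_{i ∣ m} ∑_{j ∣ n} gcd(i, j) = ∑_{t ∣ gcd(m,n)} φ(t) · τ(m/t) · τ(n/t) holds, where τ is the number-of-divisors function and φ is Euler's totient function. -/

import Mathlib

open Finset

lemma card_filter_dvd_divisors {t m : ℕ} (hm : m ≠ 0) (ht : t ∣ m) :
    ({i ∈ m.divisors | t ∣ i}).card = (m / t).divisors.card := by
  have ht0 : t ≠ 0 := by rintro rfl; exact hm (Nat.zero_dvd.mp ht)
  have hmt : m / t ≠ 0 := Nat.div_ne_zero_iff.mpr ⟨ht0, Nat.le_of_dvd (Nat.pos_of_ne_zero hm) ht⟩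
  apply Finset.card_bij' (fun i _ => i / t) (fun j _ => j * t)
  · intro i hi
    simp only [mem_filter, Nat.mem_divisors] at hi
    obtain ⟨a, rfl⟩ := hi.2
    refine Nat.mem_divisors.mpr ⟨?_, hmt⟩
    rw [Nat.mul_div_cancel_left a ht0.bot_lt]
    exact (Nat.dvd_div_iff_mul_dvd ht).mpr hi.1.1
  · intro j hj
    simp only [Nat.mem_divisors] at hj
    refine mem_filter.mpr ⟨Nat.mem_divisors.mpr ⟨?_, hm⟩, dvd_mul_left t j⟩
    calc j * t ∣ (m / t) * t := mul_dvd_mul_right hj.1 t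
      _ = m := Nat.div_mul_cancel ht
  · intro i hi
    simp only [mem_filter] at hi
    exact Nat.div_mul_cancel hi.2
  · intro j hj
    simp [Nat.mul_div_cancel _ (Nat.pos_of_ne_zero ht0)]

theorem subgroup_count_identity (m n : ℕ) (hm : 0 < m) (hn : 0 < n) :
    ∑ i ∈ m.divisors, ∑ j ∈ n.divisors, Nat.gcd i j
      = ∑ t ∈ (Nat.gcd m n).divisors,
          Nat.totient t * (m / t).divisors.card * (n / t).divisors.card := by
  have hg : Nat.gcd m n ≠ 0 := Nat.gcd_ne_zero_left hm.ne'
  have key : ∀ i ∈ m.divisors, ∀ j ∈ n.divisors,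
      Nat.gcd i j = ∑ t ∈ (Nat.gcd m n).divisors,
        if t ∣ i ∧ t ∣ j then Nat.totient t else 0 := by
    intro i hi j hj
    rw [Nat.mem_divisors] at hi hj
    have hd : Nat.gcd i j ∣ Nat.gcd m n := Nat.dvd_gcd
      ((Nat.gcd_dvd_left i j).trans hi.1) ((Nat.gcd_dvd_right i j).trans hj.1)
    rw [← Nat.sum_totient (Nat.gcd i j), ← Nat.divisors_filter_dvd_of_dvd hg hd,
      sum_filter]
    refine sum_congr rfl fun t _ => ?_
    congr 1
    simp [Nat.dvd_gcd_iff]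
  calc ∑ i ∈ m.divisors, ∑ j ∈ n.divisors, Nat.gcd i j
      = ∑ i ∈ m.divisors, ∑ j ∈ n.divisors, ∑ t ∈ (Nat.gcd m n).divisors,
          if t ∣ i ∧ t ∣ j then Nat.totient t else 0 := by
        refine sum_congr rfl fun i hi => sum_congr rfl fun j hj => key i hi j hj
    _ = ∑ i ∈ m.divisors, ∑ t ∈ (Nat.gcd m n).divisors, ∑ j ∈ n.divisors,
          if t ∣ i ∧ t ∣ j then Nat.totient t else 0 :=
        sum_congr rfl fun i _ => sum_comm
    _ = ∑ t ∈ (Nat.gcd m n).divisors, ∑ i ∈ m.divisors, ∑ j ∈ n.divisors,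
          if t ∣ i ∧ t ∣ j then Nat.totient t else 0 := sum_comm
    _ = ∑ t ∈ (Nat.gcd m n).divisors,
          Nat.totient t * (m / t).divisors.card * (n / t).divisors.card := by
        refine sum_congr rfl fun t ht => ?_
        rw [Nat.mem_divisors] at ht
        have h1 : t ∣ m := ht.1.trans (Nat.gcd_dvd_left m n)
        have h2 : t ∣ n := ht.1.trans (Nat.gcd_dvd_right m n)
        have : ∀ i j : ℕ, (if t ∣ i ∧ t ∣ j then Nat.totient t else 0)
            = Nat.totient t * (if t ∣ i then 1 else 0) * (if t ∣ j then 1 else 0) := by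
          intro i j
          by_cases h : t ∣ i <;> by_cases h' : t ∣ j <;> simp [h, h']
        simp_rw [this]
        rw [← Finset.sum_mul_sum, ← Finset.mul_sum,
          ← Finset.card_filter, ← Finset.card_filter,
          card_filter_dvd_divisors hm.ne' h1, card_filter_dvd_divisors hn.ne' h2]
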